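/- Let [τ₁, τ₂, τ₃] be a bicyclic bitrade in τ-representation, say τ_j consists of exactly two cycles. Then every cycle of τ_{j+1} and every cycle of τ_{j−1} is a transposition (has length exactly 2), the two cycles of τ_j have the same length n, and |Γ| = 2n. -/

import Mathlib

/-- The set of points moved by a permutation. -/
def mov (σ : Equiv.Perm ℕ) : Set ℕ := {x | σ x ≠ x}

/-- The underlying set `Γ = mov(τ₁) ∪ mov(τ₂) ∪ mov(τ₃)` of a triple of permutations. -/
def Gam (τ : Fin 3 → Equiv.Perm ℕ) : Set ℕ := mov (τ 0) ∪ mov (τ 1) ∪ mov (τ 2)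

/-- A bitrade in τ-representation: a triple `[τ₁, τ₂, τ₃]` of permutations of the
finite set `Γ = mov(τ₁) ∪ mov(τ₂) ∪ mov(τ₃)` (all permutations composed left to
right) satisfying (T1) `τ₁τ₂τ₃ = 1`, (T2) any cycle of `τ_i` and any cycle of `τ_j`
(`i < j`) move at most one common point, and (T3) each `τ_i` is fixed-point-free
on `Γ`. -/
structure IsTauRep (τ : Fin 3 → Equiv.Perm ℕ) : Prop where
  fin : (Gam τ).Finite
  t1 : ∀ x, τ 2 (τ 1 (τ 0 x)) = x
  t2 : ∀ i j : Fin 3, i < j → ∀ x y : ℕ, x ≠ y →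
    ¬((τ i).SameCycle x y ∧ (τ j).SameCycle x y)
  t3 : ∀ i : Fin 3, ∀ x ∈ Gam τ, τ i x ≠ x

/-- The same-cycle setoid on the set of points moved by `σ`;
its classes are the (nontrivial) cycles of `σ`. -/
def cycSetoidOn (σ : Equiv.Perm ℕ) : Setoid (mov σ) :=
  ⟨fun a b => σ.SameCycle a.1 b.1,
    ⟨fun a => Equiv.Perm.SameCycle.refl σ a.1,
     fun h => h.symm, fun h h' => h.trans h'⟩⟩

/-- `zc σ` is the number of cycles of `σ`. -/
noncomputable def zc (σ : Equiv.Perm ℕ) : ℕ := Nat.card (Quotient (cycSetoidOn σ))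

/-- (T4): the group `⟨τ₁, τ₂, τ₃⟩` acts transitively on `Γ`. -/
def TransOn (τ : Fin 3 → Equiv.Perm ℕ) : Prop :=
  ∀ x ∈ Gam τ, ∀ y ∈ Gam τ,
    ∃ g ∈ Subgroup.closure ({τ 0, τ 1, τ 2} : Set (Equiv.Perm ℕ)), g x = y

/-- A spherical bitrade in τ-representation: (T4) holds and the genus defined by
Euler's formula `order = size + 2 - 2g` is zero. -/
def Spherical (τ : Fin 3 → Equiv.Perm ℕ) : Prop :=
  IsTauRep τ ∧ TransOn τ ∧
    zc (τ 0) + zc (τ 1) + zc (τ 2) = Nat.card (Gam τ) + 2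

/-- A bitrade in τ-representation is bicyclic if some `τ_j` has exactly two cycles. -/
def Bicyclic (τ : Fin 3 → Equiv.Perm ℕ) : Prop := ∃ j : Fin 3, zc (τ j) = 2

/-- The inverse `Z⁻¹ = [τ₁⁻¹, τ₂⁻¹, τ₂τ₁]` of a bitrade in τ-representation
(`τ₂τ₁`, composed left to right, is `τ 0 * τ 1` in Lean's convention). -/
def ZInv (τ : Fin 3 → Equiv.Perm ℕ) : Fin 3 → Equiv.Perm ℕ :=
  ![(τ 0)⁻¹, (τ 1)⁻¹, τ 0 * τ 1]

/-- `SlideRel τ x j u τ'` says that `τ'` is the result of the slide expansion of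
`τ` at the point `x ∈ Γ` in direction `j`, with new point `u ∉ Γ`.  Writing
`k = j+1`, `l = j+2`, `w = xτ_j`, `a = xτ_j⁻¹`, `b = wτ_j`, `z = xτ_k`,
`y = wτ_l⁻¹`, the preconditions are that the `τ_j`-cycle through `x` has length at
least 3 and that the `τ_k`-cycle through `x` and the `τ_l`-cycle through `w` have
no common point; the new permutations send `a ↦ u ↦ b`, `x ↦ w ↦ x` (direction `j`),
insert `u` after `x` (direction `k`) and insert `u` between `y` and `w`
(direction `l`), agreeing with the old ones elsewhere. -/
def SlideRel (τ : Fin 3 → Equiv.Perm ℕ) (x : ℕ) (j : Fin 3) (u : ℕ)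
    (τ' : Fin 3 → Equiv.Perm ℕ) : Prop :=
  x ∈ Gam τ ∧ u ∉ Gam τ ∧
  τ j x ≠ x ∧ τ j (τ j x) ≠ x ∧
  (∀ p : ℕ, (τ (j + 1)).SameCycle x p → (τ (j + 2)).SameCycle (τ j x) p → False) ∧
  (τ' j ((τ j)⁻¹ x) = u ∧ τ' j u = τ j (τ j x) ∧
    τ' j x = τ j x ∧ τ' j (τ j x) = x ∧
    ∀ p : ℕ, p ≠ (τ j)⁻¹ x → p ≠ u → p ≠ x → p ≠ τ j x → τ' j p = τ j p) ∧
  (τ' (j + 1) x = u ∧ τ' (j + 1) u = τ (j + 1) x ∧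
    ∀ p : ℕ, p ≠ x → p ≠ u → τ' (j + 1) p = τ (j + 1) p) ∧
  (τ' (j + 2) ((τ (j + 2))⁻¹ (τ j x)) = u ∧ τ' (j + 2) u = τ j x ∧
    ∀ p : ℕ, p ≠ (τ (j + 2))⁻¹ (τ j x) → p ≠ u → τ' (j + 2) p = τ (j + 2) p)

section Aux

open Equiv Function Set

lemma mem_Gam_iff {τ : Fin 3 → Equiv.Perm ℕ} (h : IsTauRep τ) (i : Fin 3) (x : ℕ) :
    x ∈ Gam τ ↔ τ i x ≠ x := by
  constructor
  · exact h.t3 i x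
  · intro hx
    fin_cases i
    · exact Or.inl (Or.inl hx)
    · exact Or.inl (Or.inr hx)
    · exact Or.inr hx

lemma t2sym {τ : Fin 3 → Equiv.Perm ℕ} (h : IsTauRep τ) {i i' : Fin 3} (hne : i ≠ i')
    {x y : ℕ} (hxy : x ≠ y) (h1 : (τ i).SameCycle x y) (h2 : (τ i').SameCycle x y) :
    False := by
  rcases hne.lt_or_gt with hl | hl
  · exact h.t2 i i' hl x y hxy ⟨h1, h2⟩
  · exact h.t2 i' i hl x y hxy ⟨h2, h1⟩

lemma pigeon {σ : Equiv.Perm ℕ} (hbc : zc σ = 2) {a b c : ℕ}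
    (ha : σ a ≠ a) (hb : σ b ≠ b) (hc : σ c ≠ c) :
    σ.SameCycle a b ∨ σ.SameCycle a c ∨ σ.SameCycle b c := by
  obtain ⟨q₁, q₂, hne, huniv⟩ := Nat.card_eq_two_iff.mp hbc
  have mem : ∀ u : mov σ, Quotient.mk (cycSetoidOn σ) u = q₁ ∨
      Quotient.mk (cycSetoidOn σ) u = q₂ := by
    intro u
    have : Quotient.mk (cycSetoidOn σ) u ∈ ({q₁, q₂} : Set _) := by
      rw [huniv]; exact Set.mem_univ _
    simpa using this
  have key : ∀ u v : mov σ, Quotient.mk (cycSetoidOn σ) u = Quotient.mk (cycSetoidOn σ) v →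
      σ.SameCycle u.1 v.1 := fun u v hh => Quotient.exact hh
  rcases mem ⟨a, ha⟩ with h1 | h1 <;> rcases mem ⟨b, hb⟩ with h2 | h2 <;>
    rcases mem ⟨c, hc⟩ with h3 | h3
  · exact Or.inl (key _ _ (h1.trans h2.symm))
  · exact Or.inl (key _ _ (h1.trans h2.symm))
  · exact Or.inr (Or.inl (key _ _ (h1.trans h3.symm)))
  · exact Or.inr (Or.inr (key _ _ (h2.trans h3.symm)))
  · exact Or.inr (Or.inr (key _ _ (h2.trans h3.symm)))
  · exact Or.inr (Or.inl (key _ _ (h1.trans h3.symm)))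
  · exact Or.inl (key _ _ (h1.trans h2.symm))
  · exact Or.inl (key _ _ (h1.trans h2.symm))

lemma exists_reps {σ : Equiv.Perm ℕ} (hbc : zc σ = 2) :
    ∃ a b : ℕ, σ a ≠ a ∧ σ b ≠ b ∧ ¬ σ.SameCycle a b ∧
      ∀ y, σ y ≠ y → σ.SameCycle a y ∨ σ.SameCycle b y := by
  obtain ⟨q₁, q₂, hne, huniv⟩ := Nat.card_eq_two_iff.mp hbc
  obtain ⟨A, rfl⟩ := Quotient.exists_rep q₁
  obtain ⟨B, rfl⟩ := Quotient.exists_rep q₂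
  refine ⟨A.1, B.1, A.2, B.2, fun hAB => hne (Quotient.sound hAB), ?_⟩
  intro y hy
  have : Quotient.mk (cycSetoidOn σ) ⟨y, hy⟩ ∈
      ({Quotient.mk (cycSetoidOn σ) A, Quotient.mk (cycSetoidOn σ) B} : Set _) := by
    rw [huniv]; exact Set.mem_univ _
  rcases this with hh | hh
  · exact Or.inl (Quotient.exact hh.symm)
  · exact Or.inr (Quotient.exact (Set.mem_singleton_iff.mp hh).symm)

lemma mov_apply {σ : Equiv.Perm ℕ} {x : ℕ} (hx : σ x ≠ x) : σ (σ x) ≠ σ x :=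
  fun hh => hx (σ.injective hh)

lemma mov_zpow {σ : Equiv.Perm ℕ} {x : ℕ} (hx : σ x ≠ x) (k : ℤ) :
    σ ((σ ^ k) x) ≠ (σ ^ k) x := by
  intro hh
  apply hx
  apply (σ ^ k).injective
  have hcomm : σ ^ k * σ = σ * σ ^ k := by
    rw [← zpow_add_one, ← zpow_one_add, add_comm]
  calc (σ ^ k) (σ x) = (σ ^ k * σ) x := rfl
    _ = (σ * σ ^ k) x := by rw [hcomm]
    _ = σ ((σ ^ k) x) := rfl
    _ = (σ ^ k) x := hh

/-- An element of a finite `mov` set is a periodic point. -/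
lemma periodic_of_mov {σ : Equiv.Perm ℕ} (hfin : (mov σ).Finite) {x : ℕ} (hx : σ x ≠ x) :
    ∃ m : ℕ, 0 < m ∧ Function.IsPeriodicPt (⇑σ) m x := by
  have hmem : ∀ n : ℕ, (σ ^ n) x ∈ mov σ := by
    intro n
    have h2 : σ ((σ ^ (n : ℤ)) x) ≠ (σ ^ (n : ℤ)) x := mov_zpow hx n
    rw [zpow_natCast] at h2
    exact h2
  have hni : ¬ Function.Injective (fun n : ℕ => ((σ ^ n) x : ℕ)) := by
    intro hinj
    exact Set.infinite_of_injective_forall_mem hinj hmem hfin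
  rw [Function.not_injective_iff] at hni
  obtain ⟨m, n, hmn, hne⟩ := hni
  rcases hne.lt_or_gt with hlt | hlt
  · refine ⟨n - m, by omega, ?_⟩
    have : (σ ^ m) ((σ ^ (n - m)) x) = (σ ^ m) x := by
      rw [← Equiv.Perm.mul_apply, ← pow_add]
      rw [show m + (n - m) = n by omega]
      exact hmn.symm
    have h2 := (σ ^ m).injective this
    show (⇑σ)^[n - m] x = x
    simpa [Equiv.Perm.iterate_eq_pow] using h2
  · refine ⟨m - n, by omega, ?_⟩
    have : (σ ^ n) ((σ ^ (m - n)) x) = (σ ^ n) x := by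
      rw [← Equiv.Perm.mul_apply, ← pow_add]
      rw [show n + (m - n) = m by omega]
      exact hmn
    have h2 := (σ ^ n).injective this
    show (⇑σ)^[m - n] x = x
    simpa [Equiv.Perm.iterate_eq_pow] using h2

/-- The minimal period of a moved point equals the size of its cycle. -/
lemma minper_card {σ : Equiv.Perm ℕ} (hfin : (mov σ).Finite) {x : ℕ} (hx : σ x ≠ x) :
    Function.minimalPeriod (⇑σ) x = {y | σ.SameCycle x y}.ncard := by
  obtain ⟨m₀, hm₀, hper₀⟩ := periodic_of_mov hfin hx
  have hxper : x ∈ Function.periodicPts (⇑σ) := ⟨m₀, hm₀, hper₀⟩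
  set m := Function.minimalPeriod (⇑σ) x with hm
  have hmpos : 0 < m := Function.minimalPeriod_pos_of_mem_periodicPts hxper
  have hperm : Function.IsPeriodicPt (⇑σ) m x := Function.isPeriodicPt_minimalPeriod (⇑σ) x
  have hfix : (σ ^ (m : ℤ)) x = x := by
    have : (σ ^ m) x = x := by
      have := hperm
      simpa [Function.IsPeriodicPt, Function.IsFixedPt, Equiv.Perm.iterate_eq_pow] using this
    simpa [zpow_natCast] using this
  have hset : {y | σ.SameCycle x y} = (fun i : ℕ => (σ ^ i) x) '' Set.Iio m := by
    ext y
    constructor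
    · rintro ⟨k, rfl⟩
      have hmod_nonneg : 0 ≤ k % (m : ℤ) := Int.emod_nonneg k (by exact_mod_cast hmpos.ne')
      have hmod_lt : k % (m : ℤ) < m := Int.emod_lt_of_pos k (by exact_mod_cast hmpos)
      refine ⟨(k % (m : ℤ)).toNat, by simp only [Set.mem_Iio]; omega, ?_⟩
      have hsplit : (σ ^ k) x = (σ ^ (k % (m : ℤ))) x := by
        conv_lhs => rw [show k = k % (m : ℤ) + (m : ℤ) * (k / (m : ℤ)) by
          rw [Int.emod_add_mul_ediv]]
        rw [zpow_add, Equiv.Perm.mul_apply, zpow_mul]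
        rw [Equiv.Perm.zpow_apply_eq_self_of_apply_eq_self hfix]
      show ((σ ^ ((k % (m : ℤ)).toNat)) x : ℕ) = (σ ^ k) x
      rw [hsplit, show (σ ^ ((k % (m : ℤ)).toNat) : Equiv.Perm ℕ) = σ ^ (k % (m : ℤ)) from by
        rw [← zpow_natCast, Int.toNat_of_nonneg hmod_nonneg]]
    · rintro ⟨i, _, rfl⟩
      exact ⟨(i : ℤ), by rw [zpow_natCast]⟩
  rw [hset]
  have hinj : Set.InjOn (fun i : ℕ => (σ ^ i) x) (Set.Iio m) := by
    intro i hi j hj hij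
    have := Function.iterate_injOn_Iio_minimalPeriod (f := ⇑σ) (x := x) hi hj
    simp only [Equiv.Perm.iterate_eq_pow] at this
    exact this hij
  rw [Set.ncard_image_of_injOn hinj]
  rw [← Nat.card_coe_set_eq, Nat.card_eq_fintype_card]
  simp

end Aux

/-- In a bicyclic bitrade in τ-representation (say `τ_j` has exactly
two cycles), every cycle of `τ_{j+1}` and of `τ_{j−1} = τ_{j+2}` has length exactly 2,
the two cycles of `τ_j` have the same length `n`, and `|Γ| = 2n`.  (The length of the
cycle of a permutation through a point is its minimal period at that point.) -/
theorem bicyclic_cycle_lengths (τ : Fin 3 → Equiv.Perm ℕ) (h : IsTauRep τ)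
    (j : Fin 3) (hbc : zc (τ j) = 2) :
    (∀ x ∈ Gam τ, Function.minimalPeriod (⇑(τ (j + 1))) x = 2) ∧
    (∀ x ∈ Gam τ, Function.minimalPeriod (⇑(τ (j + 2))) x = 2) ∧
    ∃ n : ℕ, (∀ x ∈ Gam τ, Function.minimalPeriod (⇑(τ j)) x = n) ∧
      Nat.card (Gam τ) = 2 * n := by
  have hmovΓ : ∀ i : Fin 3, Gam τ = mov (τ i) := fun i => Set.ext fun x => mem_Gam_iff h i x
  have hj1 : j + 1 ≠ j := by
    intro hh
    have h10 : (1 : Fin 3) = 0 := add_left_cancel (a := j) (b := 1) (c := 0) (by simpa using hh)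
    exact absurd h10 (by decide)
  have hj2 : j + 2 ≠ j := by
    intro hh
    have h20 : (2 : Fin 3) = 0 := add_left_cancel (a := j) (b := 2) (c := 0) (by simpa using hh)
    exact absurd h20 (by decide)
  -- each τ i (i ≠ j) is an involution on Γ
  have invol : ∀ i : Fin 3, i ≠ j → ∀ x ∈ Gam τ, τ i (τ i x) = x := by
    intro i hij x hxΓ
    by_contra hne2
    have hx1 : τ i x ≠ x := h.t3 i x hxΓ
    have hx2 : τ i (τ i x) ≠ τ i x := mov_apply hx1
    have hx3 : τ i (τ i (τ i x)) ≠ τ i (τ i x) := mov_apply hx2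
    have ha : τ j x ≠ x := h.t3 j x hxΓ
    have hb : τ j (τ i x) ≠ τ i x := h.t3 j _ ((mem_Gam_iff h i _).mpr hx2)
    have hc : τ j (τ i (τ i x)) ≠ τ i (τ i x) := h.t3 j _ ((mem_Gam_iff h i _).mpr hx3)
    have hSC1 : (τ i).SameCycle x (τ i x) := ⟨1, by simp⟩
    have hSC2 : (τ i).SameCycle x (τ i (τ i x)) :=
      ⟨2, by rw [show (2 : ℤ) = 1 + 1 from rfl, zpow_add, zpow_one]; rfl⟩
    have hSC3 : (τ i).SameCycle (τ i x) (τ i (τ i x)) := ⟨1, by simp⟩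
    rcases pigeon hbc ha hb hc with hs | hs | hs
    · exact t2sym h hij (Ne.symm hx1) hSC1 hs
    · exact t2sym h hij (Ne.symm hne2) hSC2 hs
    · exact t2sym h hij (Ne.symm hx2) hSC3 hs
  -- minimal periods 2
  have minp2 : ∀ i : Fin 3, i ≠ j → ∀ x ∈ Gam τ, Function.minimalPeriod (⇑(τ i)) x = 2 := by
    intro i hij x hxΓ
    have hx1 : τ i x ≠ x := h.t3 i x hxΓ
    have hper : Function.IsPeriodicPt (⇑(τ i)) 2 x := by
      show (⇑(τ i))^[2] x = x
      exact invol i hij x hxΓ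
    rcases Nat.prime_two.eq_one_or_self_of_dvd _ hper.minimalPeriod_dvd with h1 | h2
    · exact absurd (Function.minimalPeriod_eq_one_iff_isFixedPt.mp h1) hx1
    · exact h2
  refine ⟨fun x hx => minp2 (j + 1) hj1 x hx, fun x hx => minp2 (j + 2) hj2 x hx, ?_⟩
  -- the two cycles of τ j
  obtain ⟨a, b, haj, hbj, hab, hcov⟩ := exists_reps hbc
  set σ := τ j with hσ
  set C₁ := {y | σ.SameCycle a y} with hC₁
  set C₂ := {y | σ.SameCycle b y} with hC₂
  have hC₁mov : C₁ ⊆ mov σ := by rintro y ⟨k, rfl⟩; exact mov_zpow haj k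
  have hC₂mov : C₂ ⊆ mov σ := by rintro y ⟨k, rfl⟩; exact mov_zpow hbj k
  have hmovfin : (mov σ).Finite := hmovΓ j ▸ h.fin
  have hC₁fin : C₁.Finite := hmovfin.subset hC₁mov
  have hC₂fin : C₂.Finite := hmovfin.subset hC₂mov
  have hdisj : Disjoint C₁ C₂ :=
    Set.disjoint_left.mpr fun y hy1 hy2 => hab (hy1.trans hy2.symm)
  have hcup : mov σ = C₁ ∪ C₂ := by
    ext y
    constructor
    · intro hy
      exact hcov y hy
    · rintro (hy | hy)
      · exact hC₁mov hy
      · exact hC₂mov hy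
  -- τ (j+1) swaps the two cycles
  have hswap : ∀ y, σ.SameCycle a y → σ.SameCycle b (τ (j + 1) y) := by
    intro y hy
    have hyΓ : y ∈ Gam τ := (mem_Gam_iff h j y).mpr (hC₁mov hy)
    have h1 : τ (j + 1) y ≠ y := h.t3 _ y hyΓ
    have hyΓ' : τ (j + 1) y ∈ Gam τ := (mem_Gam_iff h (j + 1) _).mpr (mov_apply h1)
    have hmv' : σ (τ (j + 1) y) ≠ τ (j + 1) y := h.t3 j _ hyΓ'
    rcases hcov _ hmv' with hs | hs
    · exact (t2sym h (Ne.symm hj1) (Ne.symm h1) (hy.symm.trans hs) ⟨1, by simp⟩).elim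
    · exact hs
  have hswap' : ∀ y, σ.SameCycle b y → σ.SameCycle a (τ (j + 1) y) := by
    intro y hy
    have hyΓ : y ∈ Gam τ := (mem_Gam_iff h j y).mpr (hC₂mov hy)
    have h1 : τ (j + 1) y ≠ y := h.t3 _ y hyΓ
    have hyΓ' : τ (j + 1) y ∈ Gam τ := (mem_Gam_iff h (j + 1) _).mpr (mov_apply h1)
    have hmv' : σ (τ (j + 1) y) ≠ τ (j + 1) y := h.t3 j _ hyΓ'
    rcases hcov _ hmv' with hs | hs
    · exact hs
    · exact (t2sym h (Ne.symm hj1) (Ne.symm h1) (hy.symm.trans hs) ⟨1, by simp⟩).elim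
  have himg : C₂ = (⇑(τ (j + 1))) '' C₁ := by
    ext y
    constructor
    · intro hy
      have hyΓ : y ∈ Gam τ := (mem_Gam_iff h j y).mpr (hC₂mov hy)
      exact ⟨τ (j + 1) y, hswap' y hy, invol (j + 1) hj1 y hyΓ⟩
    · rintro ⟨z, hz, rfl⟩
      exact hswap z hz
  have hcard : C₂.ncard = C₁.ncard := by
    rw [himg, Set.ncard_image_of_injective _ (τ (j + 1)).injective]
  refine ⟨C₁.ncard, ?_, ?_⟩
  · intro x hx
    have hmv : σ x ≠ x := h.t3 j x hx
    rw [minper_card hmovfin hmv]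
    rcases hcov x hmv with hs | hs
    · congr 1
      ext z
      exact ⟨fun hz => hs.trans hz, fun hz => hs.symm.trans hz⟩
    · have : {y | σ.SameCycle x y} = C₂ := by
        ext z
        exact ⟨fun hz => hs.trans hz, fun hz => hs.symm.trans hz⟩
      rw [this, hcard]
  · rw [Nat.card_coe_set_eq, hmovΓ j,
      show mov (τ j) = C₁ ∪ C₂ from hcup,
      Set.ncard_union_eq hdisj hC₁fin hC₂fin, hcard]
    ring
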